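/- Mixed associativity of composition and multiplicative mixed composition: for c ∈ ℝ^q⟨⟨X'⟩⟩ with |X'| = p+1, d ∈ ℝ^p⟨⟨X⟩⟩ and e ∈ ℝ^m⟨⟨X⟩⟩, one has c ∘ (d ∘̄ δ_e) = (c ∘ d) ∘̄ δ_e. -/

import Mathlib

open scoped BigOperators

namespace FPS

/-- A (noncommutative) formal power series over alphabet `X` is a map from words to `ℝ`. -/
abbrev Series (X : Type*) := List X → ℝ

noncomputable section

variable {X : Type*} [DecidableEq X]

/-- The series `1·∅`. -/
def one : Series X := fun η => if η = [] then 1 else 0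

/-- Cauchy (concatenation) product. -/
def cauchy (c d : Series X) : Series X := fun η =>
  ∑ i ∈ Finset.range (η.length + 1), c (η.take i) * d (η.drop i)

/-- Shuffle product. -/
def sh (c d : Series X) : List X → ℝ
  | [] => c [] * d []
  | x :: t => sh (fun w => c (x :: w)) d t + sh c (fun w => d (x :: w)) t

/-- Cauchy powers. -/
def cpow (c : Series X) : ℕ → Series X
  | 0 => one
  | k + 1 => cauchy c (cpow c k)

/-- Shuffle powers. -/
def shpow (c : Series X) : ℕ → Series X
  | 0 => one
  | k + 1 => sh c (shpow c k)

/-- The proper series `1 - s/(s,∅)` entering the inverse formulas (negated proper part of `s/(s,∅)`). -/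
def sprime (s : Series X) : Series X := fun w => if w = [] then 0 else - (s w / s [])

/-- Cauchy inverse `(s,∅)⁻¹ Σ_k (s')^k` of a purely improper series. -/
def cInv (s : Series X) : Series X := fun η =>
  (s [])⁻¹ * ∑ k ∈ Finset.range (η.length + 1), cpow (sprime s) k η

/-- Shuffle inverse `(s,∅)⁻¹ Σ_k (s')^{⧢k}` of a purely improper series. -/
def shInv (s : Series X) : Series X := fun η =>
  (s [])⁻¹ * ∑ k ∈ Finset.range (η.length + 1), shpow (sprime s) k η

/-- The order: minimal length of a word in the support (`⊤` for the zero series). -/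
def ord (c : Series X) : ℕ∞ := sInf ((fun η : List X => (η.length : ℕ∞)) '' {η | c η ≠ 0})

/-- `σ^n` with `σ^⊤ = 0`. -/
def powE (σ : ℝ) : ℕ∞ → ℝ := fun n => if n = ⊤ then 0 else σ ^ n.toNat

/-- The ultrametric `κ(c,d) = σ^{ord(c-d)}`. -/
def kappa (σ : ℝ) (c d : Series X) : ℝ := powE σ (ord (c - d))

/-- Order of a vector of series (minimum over components). -/
def ordV {n : ℕ} (c : Fin n → Series X) : ℕ∞ := ⨅ i, ord (c i)

/-- Ultrametric on vectors of series. -/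
def kappaV (σ : ℝ) {n : ℕ} (c d : Fin n → Series X) : ℝ := powE σ (ordV (c - d))

/-- Proper part `c - (c,∅)∅`. -/
def properPart (c : Series X) : Series X := fun w => if w = [] then 0 else c w

/-- Left concatenation by a letter: `x·s`. -/
def leftc (x : X) (s : Series X) : Series X := fun η =>
  match η with
  | [] => 0
  | y :: t => if y = x then s t else 0

end

noncomputable section

/-- `φ̄_d(η)` : the algebra homomorphism defining the multiplicative mixed composition
product, with `φ̄_d(x_0)(w) = x_0 w` and `φ̄_d(x_i)(w) = x_i (d_i ⧢ w)`. -/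
def phiWord {m : ℕ} (d : Fin m → Series (Fin (m + 1))) :
    List (Fin (m + 1)) → Series (Fin (m + 1)) → Series (Fin (m + 1))
  | [], w => w
  | i :: t, w =>
      Fin.cases (leftc 0 (phiWord d t w)) (fun j => leftc j.succ (sh (d j) (phiWord d t w))) i

/-- Multiplicative mixed composition product `c ∘̄ δ_d = Σ_η (c,η) φ̄_d(η)(1)`. -/
def mix {m : ℕ} (c : Series (Fin (m + 1))) (d : Fin m → Series (Fin (m + 1))) :
    Series (Fin (m + 1)) := fun η =>
  ∑ k ∈ Finset.range (η.length + 1),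
    ∑ v : List.Vector (Fin (m + 1)) k, c v.toList * phiWord d v.toList one η

/-- `ψ_e(η)` : the algebra homomorphism defining the composition product, with
`ψ_e(x'_i)(w) = x_0 (e_i ⧢ w)`, `e_0 = 1∅`. -/
def psiWord {ℓ m : ℕ} (e : Fin ℓ → Series (Fin (m + 1))) :
    List (Fin (ℓ + 1)) → Series (Fin (m + 1)) → Series (Fin (m + 1))
  | [], w => w
  | i :: t, w => leftc 0 (sh (Fin.cases one e i) (psiWord e t w))

/-- Composition product `c ∘ e = Σ_η (c,η) ψ_e(η)(1)`. -/
def comp {ℓ m : ℕ} (c : Series (Fin (ℓ + 1))) (e : Fin ℓ → Series (Fin (m + 1))) :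
    Series (Fin (m + 1)) := fun η =>
  ∑ k ∈ Finset.range (η.length + 1),
    ∑ v : List.Vector (Fin (ℓ + 1)) k, c v.toList * psiWord e v.toList one η

/-- The multiplicative composition product on `δ`-series:
`δ_c ∘ δ_d = δ_{d ⧢ (c ∘̄ δ_d)}`, expressed on the underlying series. -/
def star {m : ℕ} (c d : Fin m → Series (Fin (m + 1))) : Fin m → Series (Fin (m + 1)) :=
  fun i => sh (d i) (mix (c i) d)

/-- The all-ones series vector (generating series of the identity `δ_1`). -/
def oneV {X : Type*} [DecidableEq X] (m : ℕ) : Fin m → Series X := fun _ => one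

open Classical in
/-- The inverse `d^{∘-1}` in the multiplicative dynamic output feedback group: the unique
solution of `e = d^{⧢-1} ∘̄ δ_e`. -/
def dynInv {m : ℕ} (d : Fin m → Series (Fin (m + 1))) : Fin m → Series (Fin (m + 1)) :=
  if h : ∃ e : Fin m → Series (Fin (m + 1)), e = fun i => mix (shInv (d i)) e then h.choose
  else oneV m

/-- Shuffle power of a family: `c^{⧢n} = c_1^{⧢n_1} ⧢ ⋯ ⧢ c_ℓ^{⧢n_ℓ}`. -/
def shFam {X : Type*} [DecidableEq X] {ℓ : ℕ} (c : Fin ℓ → Series X) (n : Fin ℓ →₀ ℕ) :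
    Series X :=
  (List.finRange ℓ).foldr (fun i acc => sh (shpow (c i) (n i)) acc) one

/-- Wiener-Fliess composition product `d ∘̂ c = Σ_{η∈X̃*} (d,η) c^{⧢η}` of a commutative
series `d` with a (proper) noncommutative series vector `c`. -/
def wf {X : Type*} [DecidableEq X] {ℓ : ℕ} (d : MvPowerSeries (Fin ℓ) ℝ)
    (c : Fin ℓ → Series X) : Series X := fun η =>
  ∑ n ∈ Finset.Iic (Finsupp.equivFunOnFinite.symm fun _ : Fin ℓ => η.length),
    MvPowerSeries.coeff n d * shFam c n η

end


/-! ### Auxiliary lemmas for Statement 10 -/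

section ShuffleLemmas

variable {X : Type*} [DecidableEq X]

lemma sh_zero_right : ∀ (u : List X) (a : Series X), sh a (fun _ => (0:ℝ)) u = 0
  | [], a => by simp [sh]
  | x :: t, a => by
      simp only [sh]
      rw [sh_zero_right t, sh_zero_right t, add_zero]

lemma sh_add_right : ∀ (u : List X) (a b c : Series X),
    sh a (fun w => b w + c w) u = sh a b u + sh a c u
  | [], a, b, c => by simp [sh]; ring
  | x :: t, a, b, c => by
      simp only [sh]
      simp only [sh_add_right t]
      ring

lemma sh_add_left : ∀ (u : List X) (a b c : Series X),
    sh (fun w => a w + b w) c u = sh a c u + sh b c u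
  | [], a, b, c => by simp [sh]; ring
  | x :: t, a, b, c => by
      simp only [sh]
      simp only [sh_add_left t]
      ring

lemma sh_smul_right : ∀ (u : List X) (r : ℝ) (a b : Series X),
    sh a (fun w => r * b w) u = r * sh a b u
  | [], r, a, b => by simp [sh]; ring
  | x :: t, r, a, b => by
      simp only [sh]
      simp only [sh_smul_right t]
      ring

lemma sh_sum_right : ∀ (u : List X) {ι : Type*} (s : Finset ι) (a : Series X)
    (f : ι → Series X),
    sh a (fun w => ∑ i ∈ s, f i w) u = ∑ i ∈ s, sh a (f i) u
  | [], _, s, a, f => by simp [sh, Finset.mul_sum]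
  | x :: t, _, s, a, f => by
      simp only [sh]
      simp only [sh_sum_right t]
      rw [← Finset.sum_add_distrib]

lemma sh_comm : ∀ (u : List X) (a b : Series X), sh a b u = sh b a u
  | [], a, b => by simp [sh]; ring
  | x :: t, a, b => by
      simp only [sh]
      rw [sh_comm t (fun w => a (x :: w)) b, sh_comm t a (fun w => b (x :: w)), add_comm]

lemma sh_congr : ∀ (u : List X) {a a' b b' : Series X},
    (∀ w : List X, w.length ≤ u.length → a w = a' w) →
    (∀ w : List X, w.length ≤ u.length → b w = b' w) →
    sh a b u = sh a' b' u
  | [], a, a', b, b', ha, hb => by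
      simp [sh, ha [] (by simp), hb [] (by simp)]
  | x :: t, a, a', b, b', ha, hb => by
      simp only [sh]
      rw [sh_congr t (fun w hw => ha (x :: w) (by simpa using Nat.succ_le_succ hw))
            (fun w hw => hb w (le_trans hw (Nat.le_succ _))),
          sh_congr t (fun w hw => ha w (le_trans hw (Nat.le_succ _)))
            (fun w hw => hb (x :: w) (by simpa using Nat.succ_le_succ hw))]

lemma sh_vanish (u : List X) (a b : Series X)
    (h : ∀ w : List X, w.length ≤ u.length → b w = 0) : sh a b u = 0 :=
  (sh_congr u (fun _ _ => rfl) h).trans (sh_zero_right u a)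

lemma sh_assoc : ∀ (u : List X) (a b c : Series X),
    sh (sh a b) c u = sh a (sh b c) u
  | [], a, b, c => by simp [sh]; ring
  | x :: t, a, b, c => by
      simp only [sh]
      simp only [sh_add_left, sh_add_right]
      simp only [sh_assoc t]
      ring

lemma sh_left_comm (u : List X) (a b c : Series X) :
    sh a (sh b c) u = sh b (sh a c) u := by
  have h : sh a b = sh b a := funext fun w => sh_comm w a b
  rw [← sh_assoc u, h, sh_assoc u]

end ShuffleLemmas

section VecSum

lemma sum_vec_nil {α : Type*} [Fintype α] [DecidableEq α] (F : List.Vector α 0 → ℝ) :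
    ∑ v : List.Vector α 0, F v = F List.Vector.nil :=
  Fintype.sum_eq_single _ fun b hb => absurd b.eq_nil hb

lemma sum_vec_succ {α : Type*} [Fintype α] [DecidableEq α] {k : ℕ}
    (F : List.Vector α (k+1) → ℝ) :
    ∑ v : List.Vector α (k+1), F v = ∑ x : α, ∑ t : List.Vector α k, F (x ::ᵥ t) := by
  let e : α × List.Vector α k ≃ List.Vector α (k+1) :=
    { toFun := fun p => p.1 ::ᵥ p.2
      invFun := fun v => (v.head, v.tail)
      left_inv := fun p => by
        simp [List.Vector.head_cons, List.Vector.tail_cons]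
      right_inv := fun v => v.cons_head_tail }
  rw [← Equiv.sum_comp e F, Fintype.sum_prod_type]
  rfl


end VecSum

section MixLemmas

variable {m : ℕ}

lemma mix_nil (c : Series (Fin (m+1))) (e : Fin m → Series (Fin (m+1))) :
    mix c e [] = c [] := by
  unfold mix
  simp [sum_vec_nil, phiWord, one]

lemma mix_zero (e : Fin m → Series (Fin (m+1))) (η : List (Fin (m+1))) :
    mix (fun _ => (0:ℝ)) e η = 0 := by
  unfold mix; simp

lemma mix_add (f g : Series (Fin (m+1))) (e : Fin m → Series (Fin (m+1)))
    (η : List (Fin (m+1))) :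
    mix (fun w => f w + g w) e η = mix f e η + mix g e η := by
  unfold mix
  simp [add_mul, Finset.sum_add_distrib]

lemma mix_one (e : Fin m → Series (Fin (m+1))) (η : List (Fin (m+1))) :
    mix one e η = one η := by
  unfold mix
  rw [Finset.sum_range_succ']
  have h1 : ∀ k ∈ Finset.range η.length,
      (∑ v : List.Vector (Fin (m+1)) (k+1),
        one v.toList * phiWord e v.toList one η) = 0 := by
    intro k _
    refine Finset.sum_eq_zero fun v _ => ?_
    have hv : v.toList ≠ [] := by
      have := v.toList_length
      intro h; rw [h] at this; simp at this
    simp [one, hv]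
  rw [Finset.sum_eq_zero h1, zero_add, sum_vec_nil]
  simp [phiWord, one]

lemma mix_oneF (e : Fin m → Series (Fin (m+1))) :
    mix (one : Series (Fin (m+1))) e = one := funext (mix_one e)

lemma phi_vanish (e : Fin m → Series (Fin (m+1))) :
    ∀ (v : List (Fin (m+1))) (u : List (Fin (m+1))), u.length < v.length →
      phiWord e v one u = 0
  | [], u, h => absurd h (by simp)
  | i :: t, u, h => by
      refine Fin.cases ?_ (fun j => ?_) i
      · simp only [phiWord, Fin.cases_zero]
        cases u with
        | nil => rfl
        | cons y u' =>
            have h' : phiWord e t one u' = 0 :=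
              phi_vanish e t u' (by simp at h ⊢; omega)
            simp [leftc, h']
      · simp only [phiWord, Fin.cases_succ]
        cases u with
        | nil => rfl
        | cons y u' =>
            have h' : sh (e j) (phiWord e t one) u' = 0 := by
              refine sh_vanish u' _ _ fun w hw => phi_vanish e t w ?_
              simp at h; omega
            simp [leftc, h']

lemma psi_vanish {l : ℕ} (d : Fin l → Series (Fin (m+1))) :
    ∀ (v : List (Fin (l+1))) (u : List (Fin (m+1))), u.length < v.length →
      psiWord d v one u = 0
  | [], u, h => absurd h (by simp)
  | i :: t, u, h => by
      simp only [psiWord]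
      cases u with
      | nil => rfl
      | cons y u' =>
          have h' : sh (Fin.cases one d i) (psiWord d t one) u' = 0 := by
            refine sh_vanish u' _ _ fun w hw => psi_vanish d t w ?_
            simp at h; omega
          simp [leftc, h']

lemma mix_extend (s : Series (Fin (m+1))) (e : Fin m → Series (Fin (m+1)))
    (w : List (Fin (m+1))) (n : ℕ) (h : w.length ≤ n) :
    mix s e w = ∑ k ∈ Finset.range (n+1), ∑ v : List.Vector (Fin (m+1)) k,
      s v.toList * phiWord e v.toList one w := by
  unfold mix
  refine Finset.sum_subset (Finset.range_subset_range.mpr (by omega)) ?_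
  intro k hk hk'
  refine Finset.sum_eq_zero fun v _ => ?_
  have hv : w.length < v.toList.length := by
    rw [v.toList_length]
    simp only [Finset.mem_range] at hk hk'
    omega
  rw [phi_vanish e v.toList w hv, mul_zero]

lemma mix_congr (s s' : Series (Fin (m+1))) (e : Fin m → Series (Fin (m+1)))
    (η : List (Fin (m+1))) (h : ∀ w : List (Fin (m+1)), w.length ≤ η.length → s w = s' w) :
    mix s e η = mix s' e η := by
  unfold mix
  refine Finset.sum_congr rfl fun k hk => Finset.sum_congr rfl fun v _ => ?_
  rw [h v.toList (by rw [v.toList_length]; simp only [Finset.mem_range] at hk; omega)]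

lemma mix_cons_zero (c : Series (Fin (m+1))) (e : Fin m → Series (Fin (m+1)))
    (η : List (Fin (m+1))) :
    mix c e ((0 : Fin (m+1)) :: η) = mix (fun w => c (0 :: w)) e η := by
  unfold mix
  rw [List.length_cons, Finset.sum_range_succ']
  have h0 : (∑ v : List.Vector (Fin (m+1)) 0,
      c v.toList * phiWord e v.toList one ((0 : Fin (m+1)) :: η)) = 0 := by
    rw [sum_vec_nil]
    simp [phiWord, one]
  rw [h0, add_zero]
  refine Finset.sum_congr rfl fun k _ => ?_
  rw [sum_vec_succ, Fin.sum_univ_succ]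
  have hs : ∀ j : Fin m, (∑ t : List.Vector (Fin (m+1)) k,
      c ((j.succ ::ᵥ t).toList) *
        phiWord e ((j.succ ::ᵥ t).toList) one ((0 : Fin (m+1)) :: η)) = 0 := by
    intro j
    refine Finset.sum_eq_zero fun t _ => ?_
    have hne : (0 : Fin (m+1)) ≠ j.succ := (Fin.succ_ne_zero j).symm
    simp [List.Vector.toList_cons, phiWord, leftc, hne]
  simp only [hs, Finset.sum_const_zero, add_zero]
  refine Finset.sum_congr rfl fun t _ => ?_
  simp only [List.Vector.toList_cons, phiWord, Fin.cases_zero, leftc]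
  rw [if_pos trivial]

lemma mix_cons_succ (c : Series (Fin (m+1))) (e : Fin m → Series (Fin (m+1)))
    (j : Fin m) (η : List (Fin (m+1))) :
    mix c e (j.succ :: η) = sh (e j) (mix (fun w => c (j.succ :: w)) e) η := by
  have hR : sh (e j) (mix (fun w => c (j.succ :: w)) e) η
      = sh (e j) (fun w => ∑ k ∈ Finset.range (η.length+1),
          ∑ v : List.Vector (Fin (m+1)) k,
            c (j.succ :: v.toList) * phiWord e v.toList one w) η := by
    refine sh_congr η (fun _ _ => rfl) (fun w hw => ?_)
    exact mix_extend _ e w η.length hw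
  rw [hR]
  simp only [sh_sum_right η, sh_smul_right η]
  unfold mix
  rw [List.length_cons, Finset.sum_range_succ']
  have h0 : (∑ v : List.Vector (Fin (m+1)) 0,
      c v.toList * phiWord e v.toList one (j.succ :: η)) = 0 := by
    rw [sum_vec_nil]
    simp [phiWord, one]
  rw [h0, add_zero]
  refine Finset.sum_congr rfl fun k _ => ?_
  rw [sum_vec_succ, Fin.sum_univ_succ]
  have h00 : (∑ t : List.Vector (Fin (m+1)) k,
      c (((0:Fin (m+1)) ::ᵥ t).toList) *
        phiWord e (((0:Fin (m+1)) ::ᵥ t).toList) one (j.succ :: η)) = 0 := by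
    refine Finset.sum_eq_zero fun t _ => ?_
    simp [List.Vector.toList_cons, phiWord, leftc, Fin.succ_ne_zero j]
  rw [h00, zero_add]
  rw [Finset.sum_eq_single j]
  · refine Finset.sum_congr rfl fun t _ => ?_
    simp [List.Vector.toList_cons, phiWord, Fin.cases_succ, leftc]
  · intro b _ hb
    refine Finset.sum_eq_zero fun t _ => ?_
    have hne : j.succ ≠ b.succ := fun hh => hb (Fin.succ_injective _ hh).symm
    simp [List.Vector.toList_cons, phiWord, leftc, hne]
  · intro hj; exact absurd (Finset.mem_univ j) hj

lemma mix_sh (e : Fin m → Series (Fin (m+1))) :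
    ∀ (η : List (Fin (m+1))) (a b : Series (Fin (m+1))),
      mix (sh a b) e η = sh (mix a e) (mix b e) η := by
  suffices H : ∀ (n : ℕ) (η : List (Fin (m+1))), η.length ≤ n →
      ∀ a b : Series (Fin (m+1)),
      mix (sh a b) e η = sh (mix a e) (mix b e) η from
    fun η a b => H η.length η le_rfl a b
  intro n
  induction n with
  | zero =>
      intro η hη a b
      have hnil : η = [] := List.eq_nil_of_length_eq_zero (Nat.le_zero.mp hη)
      subst hnil
      simp [mix_nil, sh]
  | succ n ih =>
      intro η hη a b
      match η with
      | [] => simp [mix_nil, sh]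
      | x :: η =>
        have hη' : η.length ≤ n := by simp at hη; omega
        refine Fin.cases ?_ (fun j => ?_) x
        · -- x = 0
          rw [mix_cons_zero]
          have hab : (fun w => sh a b ((0 : Fin (m+1)) :: w))
              = fun w => sh (fun u => a (0 :: u)) b w + sh a (fun u => b (0 :: u)) w := by
            funext w; simp only [sh]
          rw [hab, mix_add, ih η hη', ih η hη']
          simp only [sh]
          have h1 : (fun w => mix a e ((0 : Fin (m+1)) :: w))
              = mix (fun u => a (0 :: u)) e := by
            funext w; rw [mix_cons_zero]
          have h2 : (fun w => mix b e ((0 : Fin (m+1)) :: w))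
              = mix (fun u => b (0 :: u)) e := by
            funext w; rw [mix_cons_zero]
          rw [h1, h2]
        · -- x = j.succ
          rw [mix_cons_succ]
          have hM : mix (fun u => sh a b (j.succ :: u)) e
              = fun w => mix (sh (fun u => a (j.succ :: u)) b) e w
                  + mix (sh a (fun u => b (j.succ :: u))) e w := by
            funext w
            have hab : (fun u => sh a b (j.succ :: u))
                = fun u => sh (fun z => a (j.succ :: z)) b u
                    + sh a (fun z => b (j.succ :: z)) u := by
              funext u; simp only [sh]
            rw [hab, mix_add]
          rw [hM, sh_add_right η]
          have h1 : sh (e j) (mix (sh (fun u => a (j.succ :: u)) b) e) η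
              = sh (e j) (sh (mix (fun u => a (j.succ :: u)) e) (mix b e)) η :=
            sh_congr η (fun _ _ => rfl) (fun w hw => ih w (le_trans hw hη') _ _)
          have h2 : sh (e j) (mix (sh a (fun u => b (j.succ :: u))) e) η
              = sh (e j) (sh (mix a e) (mix (fun u => b (j.succ :: u)) e)) η :=
            sh_congr η (fun _ _ => rfl) (fun w hw => ih w (le_trans hw hη') _ _)
          rw [h1, h2]
          simp only [sh]
          have h3 : (fun w => mix a e (j.succ :: w))
              = sh (e j) (mix (fun u => a (j.succ :: u)) e) := by
            funext w; rw [mix_cons_succ]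
          have h4 : (fun w => mix b e (j.succ :: w))
              = sh (e j) (mix (fun u => b (j.succ :: u)) e) := by
            funext w; rw [mix_cons_succ]
          rw [h3, h4, ← sh_assoc η, sh_left_comm η]

lemma mix_shF (e : Fin m → Series (Fin (m+1))) (a b : Series (Fin (m+1))) :
    mix (sh a b) e = sh (mix a e) (mix b e) :=
  funext fun η => mix_sh e η a b

lemma mix_leftc (s : Series (Fin (m+1))) (e : Fin m → Series (Fin (m+1))) :
    ∀ η : List (Fin (m+1)), mix (leftc 0 s) e η = leftc 0 (mix s e) η
  | [] => by rw [mix_nil]; rfl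
  | x :: η => by
      refine Fin.cases ?_ (fun j => ?_) x
      · rw [mix_cons_zero]
        have h : (fun w => leftc (0 : Fin (m+1)) s (0 :: w)) = s := by
          funext w; simp [leftc]
        rw [h]
        simp [leftc]
      · rw [mix_cons_succ]
        have h : (fun w => leftc (0 : Fin (m+1)) s (j.succ :: w)) = fun _ => (0:ℝ) := by
          funext w; simp [leftc, Fin.succ_ne_zero j]
        rw [h]
        have h2 : mix (fun _ => (0:ℝ)) e = fun _ => (0:ℝ) := funext fun w => mix_zero e w
        rw [h2, sh_zero_right η]
        simp [leftc, Fin.succ_ne_zero j]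

lemma mix_leftcF (s : Series (Fin (m+1))) (e : Fin m → Series (Fin (m+1))) :
    mix (leftc 0 s) e = leftc 0 (mix s e) :=
  funext (mix_leftc s e)

lemma psi_mix {p : ℕ} (d : Fin p → Series (Fin (m+1))) (e : Fin m → Series (Fin (m+1))) :
    ∀ v : List (Fin (p+1)),
      psiWord (fun j => mix (d j) e) v one = mix (psiWord d v one) e
  | [] => (mix_oneF e).symm
  | i :: t => by
      show leftc 0 (sh (Fin.cases one (fun j => mix (d j) e) i)
            (psiWord (fun j => mix (d j) e) t one))
          = mix (leftc 0 (sh (Fin.cases one d i) (psiWord d t one))) e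
      rw [psi_mix d e t, mix_leftcF, mix_shF]
      have h : mix (Fin.cases one d i : Series (Fin (m+1))) e
          = Fin.cases one (fun j => mix (d j) e) i := by
        refine Fin.cases ?_ (fun j => ?_) i
        · simp only [Fin.cases_zero]; exact mix_oneF e
        · simp only [Fin.cases_succ]
      rw [← h]

lemma mix_sum {ι : Type*} (s : Finset ι) (f : ι → Series (Fin (m+1)))
    (e : Fin m → Series (Fin (m+1))) (η : List (Fin (m+1))) :
    mix (fun w => ∑ i ∈ s, f i w) e η = ∑ i ∈ s, mix (f i) e η := by
  unfold mix
  simp only [Finset.sum_mul]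
  calc (∑ k ∈ Finset.range (η.length + 1), ∑ v : List.Vector (Fin (m+1)) k,
          ∑ i ∈ s, f i v.toList * phiWord e v.toList one η)
      = ∑ k ∈ Finset.range (η.length + 1), ∑ i ∈ s,
          ∑ v : List.Vector (Fin (m+1)) k, f i v.toList * phiWord e v.toList one η :=
        Finset.sum_congr rfl fun k _ => Finset.sum_comm
    _ = ∑ i ∈ s, ∑ k ∈ Finset.range (η.length + 1),
          ∑ v : List.Vector (Fin (m+1)) k, f i v.toList * phiWord e v.toList one η :=
        Finset.sum_comm

lemma mix_smul (r : ℝ) (f : Series (Fin (m+1))) (e : Fin m → Series (Fin (m+1)))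
    (η : List (Fin (m+1))) :
    mix (fun w => r * f w) e η = r * mix f e η := by
  unfold mix
  simp [Finset.mul_sum, mul_assoc]

lemma comp_extend {l : ℕ} (s : Series (Fin (l+1))) (d : Fin l → Series (Fin (m+1)))
    (w : List (Fin (m+1))) (n : ℕ) (h : w.length ≤ n) :
    comp s d w = ∑ k ∈ Finset.range (n+1), ∑ v : List.Vector (Fin (l+1)) k,
      s v.toList * psiWord d v.toList one w := by
  unfold comp
  refine Finset.sum_subset (Finset.range_subset_range.mpr (by omega)) ?_
  intro k hk hk'
  refine Finset.sum_eq_zero fun v _ => ?_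
  have hv : w.length < v.toList.length := by
    rw [v.toList_length]
    simp only [Finset.mem_range] at hk hk'
    omega
  rw [psi_vanish d v.toList w hv, mul_zero]

end MixLemmas

/-- Mixed associativity of the composition product and the multiplicative
mixed composition product: `c ∘ (d ∘̄ δ_e) = (c ∘ d) ∘̄ δ_e`. -/
theorem comp_mix_assoc (q p m : ℕ) (c : Fin q → Series (Fin (p + 1)))
    (d : Fin p → Series (Fin (m + 1))) (e : Fin m → Series (Fin (m + 1))) :
    ∀ i : Fin q, comp (c i) (fun j => mix (d j) e) = mix (comp (c i) d) e := by
  intro i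
  funext η
  have hL : comp (c i) (fun j => mix (d j) e) η
      = ∑ k ∈ Finset.range (η.length + 1), ∑ v : List.Vector (Fin (p+1)) k,
          c i v.toList * mix (psiWord d v.toList one) e η := by
    unfold comp
    simp only [psi_mix]
  rw [hL]
  have hg : mix (comp (c i) d) e η
      = mix (fun w => ∑ k ∈ Finset.range (η.length + 1),
          ∑ v : List.Vector (Fin (p+1)) k,
            c i v.toList * psiWord d v.toList one w) e η :=
    mix_congr _ _ e η (fun w hw => comp_extend (c i) d w η.length hw)
  rw [hg, mix_sum]
  refine Finset.sum_congr rfl fun k _ => ?_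
  rw [mix_sum]
  refine Finset.sum_congr rfl fun v _ => ?_
  rw [mix_smul]

end FPS
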